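/- Let ξ > 0 and set α = ξ. With J(y,z) the 2×2 matrix with rows (0, ξ⁻¹ e^{ξy+z}) and (−ξ⁻¹ e^{ξy+z}, 0), and H(y,z) = −ξ e^{−ξy}(y − z + 1 − e^{−z}) + 1 − e^{−ξy}, one has for all (y,z) ∈ ℝ²: ξ⁻¹ e^{ξy+z} · ∂H/∂z(y,z) = e^z − 1 and −ξ⁻¹ e^{ξy+z} · ∂H/∂y(y,z) = ξ + e^z(ξz − ξy − ξ). In other words, at α = ξ the reduced vector field (e^z − 1, ξ + e^z(αz − ξy − ξ)) equals J(y,z)∇H(y,z), so the reduced problem is Hamiltonian. -/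

import Mathlib

/-- At `α = ξ` the reduced problem `ẏ = e^z − 1`, `ż = ξ + e^z(αz − ξy − ξ)` is
Hamiltonian: with `H(y,z) = −ξ e^{−ξy}(y − z + 1 − e^{−z}) + 1 − e^{−ξy}`, the vector
field equals `J(y,z)∇H(y,z)` where `J` has rows `(0, ξ⁻¹e^{ξy+z})`, `(−ξ⁻¹e^{ξy+z}, 0)`. -/
theorem stmt_1 (ξ : ℝ) (hξ : 0 < ξ) (H : ℝ → ℝ → ℝ)
    (hH : ∀ y z : ℝ, H y z =
      -ξ * Real.exp (-ξ * y) * (y - z + 1 - Real.exp (-z)) + 1 - Real.exp (-ξ * y)) :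
    ∀ y z : ℝ,
      ξ⁻¹ * Real.exp (ξ * y + z) * deriv (fun z' => H y z') z = Real.exp z - 1 ∧
      -(ξ⁻¹ * Real.exp (ξ * y + z)) * deriv (fun y' => H y' z) y =
        ξ + Real.exp z * (ξ * z - ξ * y - ξ) := by
  intro y z
  have hfz : (fun z' => H y z') = fun z' =>
      -ξ * Real.exp (-ξ * y) * (y - z' + 1 - Real.exp (-z')) + 1 - Real.exp (-ξ * y) :=
    funext fun z' => hH y z'
  have hfy : (fun y' => H y' z) = fun y' =>
      -ξ * Real.exp (-ξ * y') * (y' - z + 1 - Real.exp (-z)) + 1 - Real.exp (-ξ * y') :=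
    funext fun y' => hH y' z
  -- derivative in z
  have hez : HasDerivAt (fun z' : ℝ => Real.exp (-z')) (-Real.exp (-z)) z := by
    simpa [Function.comp_def] using (Real.hasDerivAt_exp (-z)).comp z (hasDerivAt_neg z)
  have hz : HasDerivAt (fun z' : ℝ =>
      -ξ * Real.exp (-ξ * y) * (y - z' + 1 - Real.exp (-z')) + 1 - Real.exp (-ξ * y))
      (-ξ * Real.exp (-ξ * y) * (-1 + Real.exp (-z))) z := by
    have h1 : HasDerivAt (fun z' : ℝ => y - z' + 1 - Real.exp (-z'))
        (-1 + Real.exp (-z)) z := by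
      have := (((hasDerivAt_const z y).sub (hasDerivAt_id z)).add
        (hasDerivAt_const z 1)).sub hez
      simpa [Pi.add_def, Pi.sub_def] using this
    simpa [Pi.add_def, Pi.sub_def] using ((h1.const_mul (-ξ * Real.exp (-ξ * y))).add (hasDerivAt_const z 1)).sub
      (hasDerivAt_const z (Real.exp (-ξ * y)))
  -- derivative in y
  have hey : ∀ u : ℝ, HasDerivAt (fun y' : ℝ => Real.exp (-ξ * y')) (-ξ * Real.exp (-ξ * u)) u := by
    intro u
    have h := (Real.hasDerivAt_exp (-ξ * u)).comp u
      ((hasDerivAt_id u).const_mul (-ξ))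
    simpa [Function.comp_def, mul_comm] using h
  have hy : HasDerivAt (fun y' : ℝ =>
      -ξ * Real.exp (-ξ * y') * (y' - z + 1 - Real.exp (-z)) + 1 - Real.exp (-ξ * y'))
      ((-ξ * (-ξ * Real.exp (-ξ * y))) * (y - z + 1 - Real.exp (-z))
        + -ξ * Real.exp (-ξ * y) * 1 - (-ξ * Real.exp (-ξ * y))) y := by
    have h1 : HasDerivAt (fun y' : ℝ => -ξ * Real.exp (-ξ * y'))
        (-ξ * (-ξ * Real.exp (-ξ * y))) y := (hey y).const_mul (-ξ)
    have h2 : HasDerivAt (fun y' : ℝ => y' - z + 1 - Real.exp (-z)) 1 y := by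
      simpa [Pi.add_def, Pi.sub_def] using (((hasDerivAt_id y).sub (hasDerivAt_const y z)).add
        (hasDerivAt_const y 1)).sub (hasDerivAt_const y (Real.exp (-z)))
    have h3 := h1.mul h2
    simpa [Pi.add_def, Pi.sub_def, Pi.mul_def] using (h3.add (hasDerivAt_const y 1)).sub (hey y)
  rw [hfz, hfy, hz.deriv, hy.deriv]
  have hneg : -ξ * y = -(ξ * y) := by ring
  rw [hneg, Real.exp_neg, Real.exp_neg, Real.exp_add]
  have ha := (Real.exp_pos (ξ * y)).ne'
  have hb := (Real.exp_pos z).ne'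
  constructor
  · field_simp
    ring
  · field_simp
    ring
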